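/- For any super-operator Φ : L(F) → L(G) and any p ∈ [1, ∞], the supremum defining ‖Φ‖_{1→p} is attained on a rank-one operator: ‖Φ‖_{1→p} = max{‖Φ(|u⟩⟨v|)‖_p : u, v unit vectors in F}. -/

import Mathlib

open scoped ENNReal
open Matrix
open scoped ComplexOrder

noncomputable section

namespace SchattenNotes

/-- The vector of singular values of a matrix. -/
def singVal {m n : Type*} [Fintype m] [Fintype n] [DecidableEq n]
    (X : Matrix m n ℂ) (i : n) : ℝ :=
  Real.sqrt (((Matrix.posSemidef_conjTranspose_mul_self X).1).eigenvalues i)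

/-- The Schatten `p`-norm, for `p ∈ [1, ∞]` encoded as `p : ℝ≥0∞`. -/
def schatten {m n : Type*} [Fintype m] [Fintype n] [DecidableEq n]
    (p : ℝ≥0∞) (X : Matrix m n ℂ) : ℝ :=
  if p = ∞ then ⨆ i, singVal X i
  else (∑ i, singVal X i ^ p.toReal) ^ (1 / p.toReal)

/-- The induced `q → p` super-operator norm. -/
def opNorm {m n : Type*} [Fintype m] [Fintype n] [DecidableEq m] [DecidableEq n]
    (q p : ℝ≥0∞) (Φ : Matrix n n ℂ →ₗ[ℂ] Matrix m m ℂ) : ℝ :=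
  ⨆ X : {X : Matrix n n ℂ // X ≠ 0}, schatten p (Φ X.1) / schatten q X.1

/-- The induced `q → p` super-operator norm restricted to Hermitian inputs. -/
def opNormH {m n : Type*} [Fintype m] [Fintype n] [DecidableEq m] [DecidableEq n]
    (q p : ℝ≥0∞) (Φ : Matrix n n ℂ →ₗ[ℂ] Matrix m m ℂ) : ℝ :=
  ⨆ X : {X : Matrix n n ℂ // X.IsHermitian ∧ X ≠ 0}, schatten p (Φ X.1) / schatten q X.1

/-- The super-operator `Φ ⊗ I_{L(H)}`, where `H` has orthonormal basis indexed by `k`. -/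
def tensorId {m n : Type*} [Fintype m] [Fintype n] (k : Type*) [Fintype k]
    (Φ : Matrix n n ℂ →ₗ[ℂ] Matrix m m ℂ) :
    Matrix (n × k) (n × k) ℂ →ₗ[ℂ] Matrix (m × k) (m × k) ℂ where
  toFun X := fun r s => Φ (fun i j => X (i, r.2) (j, s.2)) r.1 s.1
  map_add' X Y := by
    funext r s
    show Φ ((fun i j => X (i, r.2) (j, s.2)) + fun i j => Y (i, r.2) (j, s.2)) r.1 s.1 = _
    exact congrFun (congrFun (map_add Φ _ _) r.1) s.1
  map_smul' c X := by
    funext r s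
    show Φ (c • fun i j => X (i, r.2) (j, s.2)) r.1 s.1 = _
    exact congrFun (congrFun (_root_.map_smul Φ c _) r.1) s.1

/-- Complete positivity of a super-operator. -/
def IsCP {m n : Type*} [Fintype m] [Fintype n]
    (Φ : Matrix n n ℂ →ₗ[ℂ] Matrix m m ℂ) : Prop :=
  ∀ (k : ℕ) (X : Matrix (n × Fin k) (n × Fin k) ℂ),
    X.PosSemidef → (tensorId (Fin k) Φ X).PosSemidef

/-- Trace preservation of a super-operator. -/
def IsTP {m n : Type*} [Fintype m] [Fintype n]
    (Φ : Matrix n n ℂ →ₗ[ℂ] Matrix m m ℂ) : Prop :=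
  ∀ X : Matrix n n ℂ, (Φ X).trace = X.trace

/-- The rank-one operator `|u⟩⟨v|`. -/
def outer {m n : Type*} (u : m → ℂ) (v : n → ℂ) : Matrix m n ℂ :=
  Matrix.vecMulVec u (star v)

/-- The quadratic form `⟨a|X|a⟩`. -/
def sand {n : Type*} [Fintype n] (a : n → ℂ) (X : Matrix n n ℂ) : ℂ :=
  star a ⬝ᵥ X *ᵥ a

/-- A unit vector. -/
def IsUnit' {n : Type*} [Fintype n] (u : n → ℂ) : Prop := star u ⬝ᵥ u = 1


/- ===== auxiliary development (inserted before stmt8) ===== -/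

/-- compatibility: the complex absolute value as an `AbsoluteValue`. -/
def Complex.abs : AbsoluteValue ℂ ℝ where
  toFun z := ‖z‖
  map_mul' := norm_mul
  nonneg' := norm_nonneg
  eq_zero' _ := norm_eq_zero
  add_le' := norm_add_le

lemma Complex.abs_conj (z : ℂ) : Complex.abs (starRingEnd ℂ z) = Complex.abs z :=
  Complex.norm_conj z

lemma Complex.abs_ofReal (r : ℝ) : Complex.abs (r : ℂ) = |r| :=
  (Complex.norm_real r).trans (Real.norm_eq_abs r)

lemma Complex.sq_abs (z : ℂ) : Complex.abs z ^ 2 = Complex.normSq z := Complex.sq_norm z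

lemma Complex.continuous_abs : Continuous Complex.abs := by
  show Continuous fun z : ℂ => ‖z‖
  exact continuous_norm

lemma EuclideanSpace.inner_piLp_equiv_symm {ι : Type*} [Fintype ι] (x y : ι → ℂ) :
    inner ℂ ((WithLp.equiv 2 _).symm x : EuclideanSpace ℂ ι) ((WithLp.equiv 2 _).symm y)
      = star x ⬝ᵥ y := by
  rw [EuclideanSpace.inner_eq_star_dotProduct, dotProduct_comm]; rfl

section Aux

variable {n : Type*} [Fintype n] [DecidableEq n]

/-! ### generic vector lemmas -/

lemma abs_dot_comm (x y : n → ℂ) :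
    Complex.abs (star x ⬝ᵥ y) = Complex.abs (star y ⬝ᵥ x) := by
  have h : star y ⬝ᵥ x = (starRingEnd ℂ) (star x ⬝ᵥ y) := by
    simp [dotProduct, map_sum, mul_comm]
  rw [h, Complex.abs_conj]

lemma bessel_dot {ι : Type*} [DecidableEq ι] (s : Finset ι) (a : ι → n → ℂ)
    (ha : ∀ i ∈ s, ∀ j ∈ s, star (a i) ⬝ᵥ a j = if i = j then 1 else 0)
    (x : n → ℂ) (hx : star x ⬝ᵥ x = 1) :
    ∑ i ∈ s, Complex.abs (star (a i) ⬝ᵥ x) ^ 2 ≤ 1 := by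
  classical
  set a' : s → EuclideanSpace ℂ n := fun i => (WithLp.equiv 2 _).symm (a i) with ha'
  have horth : Orthonormal ℂ a' := by
    rw [orthonormal_iff_ite]
    intro i j
    rw [ha', EuclideanSpace.inner_piLp_equiv_symm, ha i i.2 j j.2]
    simp only [← Subtype.ext_iff]
  set x' : EuclideanSpace ℂ n := (WithLp.equiv 2 _).symm x with hx'
  have hnx : ‖x'‖ ^ 2 = 1 := by
    have h1 : (inner ℂ x' x' : ℂ) = 1 := by
      rw [hx', EuclideanSpace.inner_piLp_equiv_symm, hx]
    rw [inner_self_eq_norm_sq_to_K] at h1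
    have h2 := congrArg Complex.re h1
    simpa [← Complex.ofReal_pow] using h2
  have hb := horth.sum_inner_products_le (s := Finset.univ) x'
  rw [hnx] at hb
  have hsum : ∑ i ∈ s, Complex.abs (star (a i) ⬝ᵥ x) ^ 2
      = ∑ i : s, ‖(inner ℂ (a' i) x' : ℂ)‖ ^ 2 := by
    rw [← Finset.sum_coe_sort]
    apply Finset.sum_congr rfl
    intro i _
    rw [ha', EuclideanSpace.inner_piLp_equiv_symm]
    rfl
  rw [hsum]
  exact hb

lemma jensen_sub {ι : Type*} (s : Finset ι) (w x : ι → ℝ)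
    (hw : ∀ i ∈ s, 0 ≤ w i) (hx : ∀ i ∈ s, 0 ≤ x i)
    (hW : ∑ i ∈ s, w i ≤ 1) {pr : ℝ} (hpr : 1 ≤ pr) :
    (∑ i ∈ s, w i * x i) ^ pr ≤ ∑ i ∈ s, w i * x i ^ pr := by
  set W := ∑ i ∈ s, w i with hWdef
  have hW0 : 0 ≤ W := Finset.sum_nonneg hw
  rcases eq_or_lt_of_le hW0 with h0 | hpos
  · have hz : ∀ i ∈ s, w i = 0 := by
      intro i hi
      by_contra hcon
      have hlt : 0 < w i := lt_of_le_of_ne (hw i hi) (Ne.symm hcon)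
      have hle : w i ≤ W := Finset.single_le_sum hw hi
      linarith
    have h1 : ∑ i ∈ s, w i * x i = 0 := Finset.sum_eq_zero fun i hi => by rw [hz i hi, zero_mul]
    have h2 : ∑ i ∈ s, w i * x i ^ pr = 0 := Finset.sum_eq_zero fun i hi => by rw [hz i hi, zero_mul]
    rw [h1, h2, Real.zero_rpow (by linarith)]
  · have key := Real.rpow_arith_mean_le_arith_mean_rpow s (fun i => w i / W) x
      (fun i hi => div_nonneg (hw i hi) hW0)
      (by rw [← Finset.sum_div]; field_simp; exact hWdef.symm) hx hpr
    have hL : ∑ i ∈ s, (w i / W) * x i = (∑ i ∈ s, w i * x i) / W := by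
      rw [Finset.sum_div]; exact Finset.sum_congr rfl fun i _ => by ring
    have hR : ∑ i ∈ s, (w i / W) * x i ^ pr = (∑ i ∈ s, w i * x i ^ pr) / W := by
      rw [Finset.sum_div]; exact Finset.sum_congr rfl fun i _ => by ring
    rw [hL, hR, Real.div_rpow (Finset.sum_nonneg fun i hi => mul_nonneg (hw i hi) (hx i hi)) hW0,
      div_le_div_iff₀ (Real.rpow_pos_of_pos hpos pr) hpos] at key
    have hWW : W ^ pr ≤ W := by
      calc W ^ pr ≤ W ^ (1:ℝ) := Real.rpow_le_rpow_of_exponent_ge hpos hW hpr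
        _ = W := Real.rpow_one W
    have hRnn : 0 ≤ ∑ i ∈ s, w i * x i ^ pr :=
      Finset.sum_nonneg fun i hi => mul_nonneg (hw i hi) (Real.rpow_nonneg (hx i hi) pr)
    have h2 : (∑ i ∈ s, w i * x i) ^ pr * W ≤ (∑ i ∈ s, w i * x i ^ pr) * W :=
      le_trans key (by nlinarith)
    exact le_of_mul_le_mul_right h2 hpos

lemma dot_sum {ι : Type*} (t : Finset ι) (a : n → ℂ) (f : ι → n → ℂ) :
    a ⬝ᵥ (∑ i ∈ t, f i) = ∑ i ∈ t, a ⬝ᵥ f i := by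
  induction t using Finset.cons_induction with
  | empty => simp
  | cons b s hb ih => rw [Finset.sum_cons, Finset.sum_cons, dotProduct_add, ih]

lemma sum_mulVec' {ι : Type*} (t : Finset ι) (B : ι → Matrix n n ℂ) (x : n → ℂ) :
    (∑ i ∈ t, B i) *ᵥ x = ∑ i ∈ t, B i *ᵥ x := by
  induction t using Finset.cons_induction with
  | empty => simp
  | cons b s hb ih => rw [Finset.sum_cons, Finset.sum_cons, Matrix.add_mulVec, ih]

lemma outer_mulVec (u : n → ℂ) (v : n → ℂ) (x : n → ℂ) :
    outer u v *ᵥ x = (star v ⬝ᵥ x) • u := by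
  funext i
  simp only [Matrix.mulVec, dotProduct, outer, Matrix.vecMulVec_apply,
    Pi.smul_apply, smul_eq_mul, Pi.star_apply]
  rw [Finset.sum_mul]
  exact Finset.sum_congr rfl fun j _ => by ring

/-! ### SVD -/

/-- right singular vectors -/
def rvec (X : Matrix n n ℂ) (j : n) : n → ℂ :=
  ((Matrix.posSemidef_conjTranspose_mul_self X).1.eigenvectorBasis j : EuclideanSpace ℂ n)

/-- left singular vectors -/
def lvec (X : Matrix n n ℂ) (j : n) : n → ℂ :=
  if singVal X j = 0 then rvec X j else (singVal X j : ℂ)⁻¹ • (X *ᵥ rvec X j)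

lemma singVal_nonneg (X : Matrix n n ℂ) (j : n) : 0 ≤ singVal X j := Real.sqrt_nonneg _

lemma rvec_dot (X : Matrix n n ℂ) (i j : n) :
    star (rvec X i) ⬝ᵥ rvec X j = if i = j then 1 else 0 := by
  have h := (Matrix.posSemidef_conjTranspose_mul_self X).1.eigenvectorBasis.orthonormal
  rw [orthonormal_iff_ite] at h
  have := h i j
  rwa [EuclideanSpace.inner_eq_star_dotProduct, dotProduct_comm] at this

lemma conjTranspose_mulVec_rvec (X : Matrix n n ℂ) (j : n) :
    (Xᴴ * X) *ᵥ rvec X j = ((singVal X j ^ 2 : ℝ) : ℂ) • rvec X j := by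
  have h := (Matrix.posSemidef_conjTranspose_mul_self X).1.mulVec_eigenvectorBasis j
  have he : (Matrix.posSemidef_conjTranspose_mul_self X).1.eigenvalues j = singVal X j ^ 2 := by
    rw [singVal, Real.sq_sqrt ((Matrix.posSemidef_conjTranspose_mul_self X).eigenvalues_nonneg j)]
  rw [he] at h
  rw [rvec]
  convert h using 1
  ext k; simp [Complex.real_smul]

lemma mulVec_rvec_dot (X : Matrix n n ℂ) (i j : n) :
    star (X *ᵥ rvec X i) ⬝ᵥ (X *ᵥ rvec X j)
      = ((singVal X j ^ 2 : ℝ) : ℂ) * (if i = j then 1 else 0) := by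
  have h1 : star (X *ᵥ rvec X i) ⬝ᵥ (X *ᵥ rvec X j)
      = star (rvec X i) ⬝ᵥ ((Xᴴ * X) *ᵥ rvec X j) := by
    rw [star_mulVec, ← Matrix.dotProduct_mulVec, Matrix.mulVec_mulVec]
  rw [h1, conjTranspose_mulVec_rvec, dotProduct_smul, rvec_dot, smul_eq_mul]

lemma rvec_unit (X : Matrix n n ℂ) (j : n) : star (rvec X j) ⬝ᵥ rvec X j = 1 := by
  simpa using rvec_dot X j j

lemma lvec_unit (X : Matrix n n ℂ) (j : n) : star (lvec X j) ⬝ᵥ lvec X j = 1 := by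
  rw [lvec]
  split_ifs with h
  · exact rvec_unit X j
  · rw [star_smul, smul_dotProduct, dotProduct_smul, mulVec_rvec_dot]
    simp only [if_pos rfl, mul_one, smul_eq_mul, star_inv₀, RCLike.star_def,
      Complex.conj_ofReal]
    have hs : (singVal X j : ℂ) ≠ 0 := Complex.ofReal_ne_zero.mpr h
    field_simp
    simp

lemma mulVec_rvec_eq (X : Matrix n n ℂ) (j : n) :
    X *ᵥ rvec X j = (singVal X j : ℂ) • lvec X j := by
  by_cases h : singVal X j = 0
  · have h0 : star (X *ᵥ rvec X j) ⬝ᵥ (X *ᵥ rvec X j) = 0 := by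
      rw [mulVec_rvec_dot, h]; simp
    rw [dotProduct_star_self_eq_zero.mp h0, h]
    simp
  · rw [lvec, if_neg h, smul_smul, mul_inv_cancel₀ (Complex.ofReal_ne_zero.mpr h), one_smul]

lemma lvec_dot (X : Matrix n n ℂ) {i j : n} (hi : singVal X i ≠ 0) (hj : singVal X j ≠ 0) :
    star (lvec X i) ⬝ᵥ lvec X j = if i = j then 1 else 0 := by
  rw [lvec, lvec, if_neg hi, if_neg hj, star_smul, smul_dotProduct,
    dotProduct_smul, mulVec_rvec_dot]
  simp only [smul_eq_mul, star_inv₀, RCLike.star_def, Complex.conj_ofReal]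
  split_ifs with h
  · subst h
    have hs : (singVal X i : ℂ) ≠ 0 := Complex.ofReal_ne_zero.mpr hi
    field_simp; simp
  · simp

lemma sum_rvec_outer (X : Matrix n n ℂ) (r c : n) :
    ∑ j, rvec X j r * (starRingEnd ℂ) (rvec X j c) = if r = c then 1 else 0 := by
  set U := (Matrix.posSemidef_conjTranspose_mul_self X).1.eigenvectorUnitary with hUdef
  have hU : (U : Matrix n n ℂ) * star (U : Matrix n n ℂ) = 1 :=
    Matrix.mem_unitaryGroup_iff.mp U.2
  have h2 : ((U : Matrix n n ℂ) * star (U : Matrix n n ℂ)) r c = (1 : Matrix n n ℂ) r c := by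
    rw [hU]
  rw [Matrix.mul_apply] at h2
  simp only [Matrix.star_apply, Matrix.one_apply] at h2
  convert h2 using 2 with j
  rfl

lemma svd_decomp (X : Matrix n n ℂ) :
    X = ∑ j, (singVal X j : ℂ) • outer (lvec X j) (rvec X j) := by
  funext r c
  rw [Matrix.sum_apply]
  have key : ∀ j, ((singVal X j : ℂ) • outer (lvec X j) (rvec X j)) r c
      = (X *ᵥ rvec X j) r * (starRingEnd ℂ) (rvec X j c) := by
    intro j
    rw [mulVec_rvec_eq]
    simp only [Matrix.smul_apply, outer, Matrix.vecMulVec_apply, Pi.star_apply,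
      Pi.smul_apply, smul_eq_mul, RCLike.star_def]
    ring
  simp only [key]
  simp only [Matrix.mulVec, dotProduct, Finset.sum_mul]
  rw [Finset.sum_comm]
  have h3 : ∀ c', ∑ j, X r c' * rvec X j c' * (starRingEnd ℂ) (rvec X j c)
      = X r c' * (if c' = c then 1 else 0) := by
    intro c'
    have h4 : ∀ j, X r c' * rvec X j c' * (starRingEnd ℂ) (rvec X j c)
        = X r c' * (rvec X j c' * (starRingEnd ℂ) (rvec X j c)) := fun j => by ring
    simp only [h4, ← Finset.mul_sum, sum_rvec_outer]
  simp only [h3]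
  simp

lemma singVal_abs_dot (X : Matrix n n ℂ) (j : n) :
    singVal X j = Complex.abs (star (lvec X j) ⬝ᵥ (X *ᵥ rvec X j)) := by
  rw [mulVec_rvec_eq, dotProduct_smul, lvec_unit, smul_eq_mul, mul_one,
    Complex.abs_ofReal, abs_of_nonneg (singVal_nonneg X j)]

lemma dot_svd_expand (A : Matrix n n ℂ) (a b : n → ℂ) :
    star a ⬝ᵥ (A *ᵥ b)
      = ∑ k, (singVal A k : ℂ) * ((star a ⬝ᵥ lvec A k) * (star (rvec A k) ⬝ᵥ b)) := by
  conv_lhs => rw [svd_decomp A]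
  rw [sum_mulVec', dot_sum]
  apply Finset.sum_congr rfl
  intro k _
  rw [Matrix.smul_mulVec, outer_mulVec, dotProduct_smul, dotProduct_smul]
  simp only [smul_eq_mul]
  ring

lemma diag_rpow_le (A : Matrix n n ℂ) {ι : Type*} [DecidableEq ι] (t : Finset ι)
    (a b : ι → n → ℂ)
    (ha : ∀ i ∈ t, ∀ j ∈ t, star (a i) ⬝ᵥ a j = if i = j then 1 else 0)
    (hb : ∀ i ∈ t, ∀ j ∈ t, star (b i) ⬝ᵥ b j = if i = j then 1 else 0)
    {pr : ℝ} (hpr : 1 ≤ pr) :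
    ∑ i ∈ t, Complex.abs (star (a i) ⬝ᵥ (A *ᵥ b i)) ^ pr ≤ ∑ k, singVal A k ^ pr := by
  classical
  set K : Finset n := Finset.univ.filter (fun k => singVal A k ≠ 0) with hK
  have hKs : ∀ k ∈ K, singVal A k ≠ 0 := fun k hk => (Finset.mem_filter.mp hk).2
  set P : ι → n → ℝ := fun i k => Complex.abs (star (a i) ⬝ᵥ lvec A k) with hP
  set Q : ι → n → ℝ := fun i k => Complex.abs (star (rvec A k) ⬝ᵥ b i) with hQ
  set R : ι → n → ℝ := fun i k => (P i k ^ 2 + Q i k ^ 2) / 2 with hR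
  have hRnn : ∀ i k, 0 ≤ R i k := fun i k => by
    have : 0 ≤ P i k ^ 2 + Q i k ^ 2 := by positivity
    simp only [hR]; linarith
  have hd : ∀ i, star (a i) ⬝ᵥ (A *ᵥ b i)
      = ∑ k ∈ K, (singVal A k : ℂ) * ((star (a i) ⬝ᵥ lvec A k) * (star (rvec A k) ⬝ᵥ b i)) := by
    intro i
    rw [dot_svd_expand]
    symm
    apply Finset.sum_subset (Finset.filter_subset _ _)
    intro k _ hk
    have h0 : singVal A k = 0 := by
      by_contra hcon
      exact hk (Finset.mem_filter.mpr ⟨Finset.mem_univ k, hcon⟩)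
    rw [h0]; simp
  have habs : ∀ i, Complex.abs (star (a i) ⬝ᵥ (A *ᵥ b i)) ≤ ∑ k ∈ K, R i k * singVal A k := by
    intro i
    rw [hd i]
    refine le_trans (Complex.abs.sum_le _ _) (Finset.sum_le_sum fun k hk => ?_)
    rw [_root_.map_mul, _root_.map_mul, Complex.abs_ofReal, abs_of_nonneg (singVal_nonneg A k)]
    have h1 : Complex.abs (star (a i) ⬝ᵥ lvec A k) * Complex.abs (star (rvec A k) ⬝ᵥ b i)
        ≤ R i k := by
      have := two_mul_le_add_sq (P i k) (Q i k)
      simp only [hR, hP, hQ]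
      nlinarith [Complex.abs.nonneg (star (a i) ⬝ᵥ lvec A k),
        Complex.abs.nonneg (star (rvec A k) ⬝ᵥ b i)]
    calc singVal A k * (Complex.abs (star (a i) ⬝ᵥ lvec A k)
            * Complex.abs (star (rvec A k) ⬝ᵥ b i))
        ≤ singVal A k * R i k :=
          mul_le_mul_of_nonneg_left h1 (singVal_nonneg A k)
      _ = R i k * singVal A k := mul_comm _ _
  have hrow : ∀ i ∈ t, ∑ k ∈ K, R i k ≤ 1 := by
    intro i hi
    have hau : star (a i) ⬝ᵥ a i = 1 := by
      have := ha i hi i hi; simpa using this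
    have hP2 : ∑ k ∈ K, P i k ^ 2 ≤ 1 := by
      have hbes := bessel_dot K (lvec A)
        (fun k hk l hl => lvec_dot A (hKs k hk) (hKs l hl)) (a i) hau
      refine le_trans (le_of_eq (Finset.sum_congr rfl fun k _ => ?_)) hbes
      rw [hP]; rw [abs_dot_comm]
    have hQ2 : ∑ k ∈ K, Q i k ^ 2 ≤ 1 := by
      have hbu : star (b i) ⬝ᵥ b i = 1 := by
        have := hb i hi i hi; simpa using this
      exact bessel_dot K (rvec A) (fun k _ l _ => rvec_dot A k l) (b i) hbu
    have : ∑ k ∈ K, R i k = ((∑ k ∈ K, P i k ^ 2) + ∑ k ∈ K, Q i k ^ 2) / 2 := by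
      rw [hR, ← Finset.sum_add_distrib, Finset.sum_div]
    rw [this]; linarith
  have hcol : ∀ k ∈ K, ∑ i ∈ t, R i k ≤ 1 := by
    intro k hk
    have hP2 : ∑ i ∈ t, P i k ^ 2 ≤ 1 :=
      bessel_dot t a ha (lvec A k) (lvec_unit A k)
    have hQ2 : ∑ i ∈ t, Q i k ^ 2 ≤ 1 := by
      have hbes := bessel_dot t b hb (rvec A k) (rvec_unit A k)
      refine le_trans (le_of_eq (Finset.sum_congr rfl fun i _ => ?_)) hbes
      rw [hQ]; rw [abs_dot_comm]
    have : ∑ i ∈ t, R i k = ((∑ i ∈ t, P i k ^ 2) + ∑ i ∈ t, Q i k ^ 2) / 2 := by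
      rw [hR, ← Finset.sum_add_distrib, Finset.sum_div]
    rw [this]; linarith
  have hjen : ∀ i ∈ t, Complex.abs (star (a i) ⬝ᵥ (A *ᵥ b i)) ^ pr
      ≤ ∑ k ∈ K, R i k * singVal A k ^ pr := by
    intro i hi
    calc Complex.abs (star (a i) ⬝ᵥ (A *ᵥ b i)) ^ pr
        ≤ (∑ k ∈ K, R i k * singVal A k) ^ pr :=
          Real.rpow_le_rpow (Complex.abs.nonneg _) (habs i) (by linarith)
      _ ≤ ∑ k ∈ K, R i k * singVal A k ^ pr :=
          jensen_sub K (R i) (singVal A) (fun k _ => hRnn i k)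
            (fun k _ => singVal_nonneg A k) (hrow i hi) hpr
  calc ∑ i ∈ t, Complex.abs (star (a i) ⬝ᵥ (A *ᵥ b i)) ^ pr
      ≤ ∑ i ∈ t, ∑ k ∈ K, R i k * singVal A k ^ pr := Finset.sum_le_sum hjen
    _ = ∑ k ∈ K, (∑ i ∈ t, R i k) * singVal A k ^ pr := by
        rw [Finset.sum_comm]
        exact Finset.sum_congr rfl fun k _ => by rw [Finset.sum_mul]
    _ ≤ ∑ k ∈ K, singVal A k ^ pr := Finset.sum_le_sum fun k hk => by
        have := mul_le_mul_of_nonneg_right (hcol k hk)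
          (Real.rpow_nonneg (singVal_nonneg A k) pr)
        simpa using this
    _ ≤ ∑ k, singVal A k ^ pr :=
        Finset.sum_le_sum_of_subset_of_nonneg (Finset.filter_subset _ _)
          (fun k _ _ => Real.rpow_nonneg (singVal_nonneg A k) pr)

lemma linf_bound (A : Matrix n n ℂ) (a b : n → ℂ)
    (ha : star a ⬝ᵥ a = 1) (hb : star b ⬝ᵥ b = 1) :
    Complex.abs (star a ⬝ᵥ (A *ᵥ b)) ≤ ⨆ k, singVal A k := by
  classical
  set K : Finset n := Finset.univ.filter (fun k => singVal A k ≠ 0) with hK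
  have hKs : ∀ k ∈ K, singVal A k ≠ 0 := fun k hk => (Finset.mem_filter.mp hk).2
  rcases isEmpty_or_nonempty n with hn | hn
  · exfalso
    have : star a ⬝ᵥ a = 0 := by simp [dotProduct]
    rw [ha] at this
    exact one_ne_zero this
  have hsup0 : 0 ≤ ⨆ k, singVal A k := Real.iSup_nonneg (singVal_nonneg A)
  set P : n → ℝ := fun k => Complex.abs (star a ⬝ᵥ lvec A k) with hP
  set Q : n → ℝ := fun k => Complex.abs (star (rvec A k) ⬝ᵥ b) with hQ
  have hd : star a ⬝ᵥ (A *ᵥ b)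
      = ∑ k ∈ K, (singVal A k : ℂ) * ((star a ⬝ᵥ lvec A k) * (star (rvec A k) ⬝ᵥ b)) := by
    rw [dot_svd_expand]
    symm
    apply Finset.sum_subset (Finset.filter_subset _ _)
    intro k _ hk
    have h0 : singVal A k = 0 := by
      by_contra hcon
      exact hk (Finset.mem_filter.mpr ⟨Finset.mem_univ k, hcon⟩)
    rw [h0]; simp
  have hP2 : ∑ k ∈ K, P k ^ 2 ≤ 1 := by
    have hbes := bessel_dot K (lvec A)
      (fun k hk l hl => lvec_dot A (hKs k hk) (hKs l hl)) a ha
    refine le_trans (le_of_eq (Finset.sum_congr rfl fun k _ => ?_)) hbes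
    rw [hP]; rw [abs_dot_comm]
  have hQ2 : ∑ k ∈ K, Q k ^ 2 ≤ 1 :=
    bessel_dot K (rvec A) (fun k _ l _ => rvec_dot A k l) b hb
  have hPQ : ∑ k ∈ K, P k * Q k ≤ 1 := by
    have hcs := Finset.sum_mul_sq_le_sq_mul_sq K P Q
    have hnn : 0 ≤ ∑ k ∈ K, P k * Q k :=
      Finset.sum_nonneg fun k _ => mul_nonneg (Complex.abs.nonneg _) (Complex.abs.nonneg _)
    have hp0 : 0 ≤ ∑ k ∈ K, P k ^ 2 := Finset.sum_nonneg fun k _ => sq_nonneg _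
    have hq0 : 0 ≤ ∑ k ∈ K, Q k ^ 2 := Finset.sum_nonneg fun k _ => sq_nonneg _
    nlinarith
  calc Complex.abs (star a ⬝ᵥ (A *ᵥ b))
      ≤ ∑ k ∈ K, singVal A k * (P k * Q k) := by
        rw [hd]
        refine le_trans (Complex.abs.sum_le _ _) (Finset.sum_le_sum fun k hk => ?_)
        rw [_root_.map_mul, _root_.map_mul, Complex.abs_ofReal, abs_of_nonneg (singVal_nonneg A k)]
    _ ≤ ∑ k ∈ K, (⨆ j, singVal A j) * (P k * Q k) := by
        refine Finset.sum_le_sum fun k _ => ?_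
        exact mul_le_mul_of_nonneg_right
          (le_ciSup (Set.Finite.bddAbove (Set.finite_range _)) k)
          (mul_nonneg (Complex.abs.nonneg _) (Complex.abs.nonneg _))
    _ = (⨆ j, singVal A j) * ∑ k ∈ K, P k * Q k := by rw [← Finset.mul_sum]
    _ ≤ (⨆ j, singVal A j) * 1 := mul_le_mul_of_nonneg_left hPQ hsup0
    _ = ⨆ j, singVal A j := mul_one _

/-! ### schatten basics -/

lemma schatten_nonneg (p : ℝ≥0∞) (X : Matrix n n ℂ) : 0 ≤ schatten p X := by
  rw [schatten]
  split_ifs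
  · exact Real.iSup_nonneg (singVal_nonneg X)
  · exact Real.rpow_nonneg
      (Finset.sum_nonneg fun i _ => Real.rpow_nonneg (singVal_nonneg X i) _) _

lemma schatten_one (X : Matrix n n ℂ) : schatten 1 X = ∑ j, singVal X j := by
  rw [schatten, if_neg (by simp : (1:ℝ≥0∞) ≠ ∞)]
  simp [ENNReal.toReal_one, Real.rpow_one]

lemma schatten_one_pos {X : Matrix n n ℂ} (hX : X ≠ 0) : 0 < schatten 1 X := by
  rw [schatten_one]
  rcases lt_or_eq_of_le (Finset.sum_nonneg fun j (_ : j ∈ Finset.univ) => singVal_nonneg X j)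
    with h | h
  · exact h
  · exfalso
    apply hX
    have hz : ∀ j ∈ Finset.univ, singVal X j = 0 :=
      (Finset.sum_eq_zero_iff_of_nonneg fun j _ => singVal_nonneg X j).mp h.symm
    rw [svd_decomp X]
    apply Finset.sum_eq_zero
    intro j hj
    rw [hz j hj]
    simp

lemma Lp_sum_le {κ ι : Type*} (t : Finset κ) (u : Finset ι) (g : ι → κ → ℝ)
    (hg : ∀ i j, 0 ≤ g i j) {pr : ℝ} (hpr : 1 ≤ pr) :
    (∑ j ∈ t, (∑ i ∈ u, g i j) ^ pr) ^ (1/pr)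
      ≤ ∑ i ∈ u, (∑ j ∈ t, g i j ^ pr) ^ (1/pr) := by
  have hpr0 : pr ≠ 0 := by linarith
  induction u using Finset.cons_induction with
  | empty =>
    simp only [Finset.sum_empty]
    rw [show ∑ j ∈ t, (0:ℝ) ^ pr = 0 from Finset.sum_eq_zero fun j _ => Real.zero_rpow hpr0,
      Real.zero_rpow (one_div_ne_zero hpr0)]
  | cons i₀ s hi₀ ih =>
    calc (∑ j ∈ t, (∑ i ∈ Finset.cons i₀ s hi₀, g i j) ^ pr) ^ (1/pr)
        = (∑ j ∈ t, (g i₀ j + ∑ i ∈ s, g i j) ^ pr) ^ (1/pr) := by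
          congr 1
          exact Finset.sum_congr rfl fun j _ => by rw [Finset.sum_cons]
      _ ≤ (∑ j ∈ t, g i₀ j ^ pr) ^ (1/pr) + (∑ j ∈ t, (∑ i ∈ s, g i j) ^ pr) ^ (1/pr) :=
          Real.Lp_add_le_of_nonneg (s := t) (f := fun j => g i₀ j)
            (g := fun j => ∑ i ∈ s, g i j) hpr
            (fun j _ => hg i₀ j) (fun j _ => Finset.sum_nonneg fun i _ => hg i j)
      _ ≤ (∑ j ∈ t, g i₀ j ^ pr) ^ (1/pr) + ∑ i ∈ s, (∑ j ∈ t, g i j ^ pr) ^ (1/pr) :=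
          add_le_add_right ih _
      _ = ∑ i ∈ Finset.cons i₀ s hi₀, (∑ j ∈ t, g i j ^ pr) ^ (1/pr) := by
          rw [Finset.sum_cons]

lemma schatten_convex {ι : Type*} [Fintype ι] [DecidableEq ι]
    {p : ℝ≥0∞} (hp : 1 ≤ p) (c : ι → ℝ) (hc : ∀ i, 0 ≤ c i) (A : ι → Matrix n n ℂ) :
    schatten p (∑ i, (c i : ℂ) • A i) ≤ ∑ i, c i * schatten p (A i) := by
  classical
  set Y : Matrix n n ℂ := ∑ i, (c i : ℂ) • A i with hY
  have hexp : ∀ j, star (lvec Y j) ⬝ᵥ (Y *ᵥ rvec Y j)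
      = ∑ i, (c i : ℂ) * (star (lvec Y j) ⬝ᵥ (A i *ᵥ rvec Y j)) := by
    intro j
    conv_lhs => rw [hY]
    rw [sum_mulVec', dot_sum]
    exact Finset.sum_congr rfl fun i _ => by
      rw [Matrix.smul_mulVec, dotProduct_smul, smul_eq_mul]
  have habs : ∀ j, singVal Y j
      ≤ ∑ i, c i * Complex.abs (star (lvec Y j) ⬝ᵥ (A i *ᵥ rvec Y j)) := by
    intro j
    rw [singVal_abs_dot Y j, hexp j]
    refine le_trans (Complex.abs.sum_le _ _) (Finset.sum_le_sum fun i _ => ?_)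
    rw [_root_.map_mul, Complex.abs_ofReal, abs_of_nonneg (hc i)]
  rcases eq_or_ne p ∞ with hp' | hp'
  · subst hp'
    rw [schatten, if_pos rfl]
    have hsch : ∀ i, schatten (⊤:ℝ≥0∞) (A i) = ⨆ k, singVal (A i) k := fun i => by
      rw [schatten, if_pos rfl]
    rcases isEmpty_or_nonempty n with hn | hn
    · rw [Real.iSup_of_isEmpty]
      exact Finset.sum_nonneg fun i _ => mul_nonneg (hc i) (schatten_nonneg _ _)
    · refine ciSup_le fun j => le_trans (habs j) (Finset.sum_le_sum fun i _ => ?_)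
      rw [hsch i]
      exact mul_le_mul_of_nonneg_left
        (linf_bound (A i) (lvec Y j) (rvec Y j) (lvec_unit Y j) (rvec_unit Y j)) (hc i)
  · have hpr : 1 ≤ p.toReal := by
      rw [← ENNReal.toReal_one]
      exact ENNReal.toReal_mono hp' hp
    have hpr0 : p.toReal ≠ 0 := by linarith
    rw [schatten, if_neg hp']
    have hsch : ∀ i, schatten p (A i) = (∑ k, singVal (A i) k ^ p.toReal) ^ (1/p.toReal) :=
      fun i => by rw [schatten, if_neg hp']
    set pr := p.toReal with hprdef
    set J : Finset n := Finset.univ.filter (fun j => singVal Y j ≠ 0) with hJ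
    set w : ι → n → ℝ := fun i j => Complex.abs (star (lvec Y j) ⬝ᵥ (A i *ᵥ rvec Y j)) with hw
    have h0 : ∑ j, singVal Y j ^ pr = ∑ j ∈ J, singVal Y j ^ pr := by
      symm
      apply Finset.sum_subset (Finset.filter_subset _ _)
      intro j _ hj
      have hz : singVal Y j = 0 := by
        by_contra hcon
        exact hj (Finset.mem_filter.mpr ⟨Finset.mem_univ j, hcon⟩)
      rw [hz, Real.zero_rpow hpr0]
    have step1 : ∑ j ∈ J, singVal Y j ^ pr ≤ ∑ j ∈ J, (∑ i, c i * w i j) ^ pr :=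
      Finset.sum_le_sum fun j _ =>
        Real.rpow_le_rpow (singVal_nonneg Y j) (habs j) (by linarith)
    have step2 : (∑ j ∈ J, (∑ i, c i * w i j) ^ pr) ^ (1/pr)
        ≤ ∑ i, (∑ j ∈ J, (c i * w i j) ^ pr) ^ (1/pr) :=
      Lp_sum_le J Finset.univ (fun i j => c i * w i j)
        (fun i j => mul_nonneg (hc i) (Complex.abs.nonneg _)) hpr
    have step3 : ∀ i, (∑ j ∈ J, (c i * w i j) ^ pr) ^ (1/pr)
        = c i * (∑ j ∈ J, w i j ^ pr) ^ (1/pr) := by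
      intro i
      have h1 : ∑ j ∈ J, (c i * w i j) ^ pr = c i ^ pr * ∑ j ∈ J, w i j ^ pr := by
        rw [Finset.mul_sum]
        exact Finset.sum_congr rfl fun j _ => Real.mul_rpow (hc i) (Complex.abs.nonneg _)
      have h2 : (c i ^ pr) ^ (1/pr) = c i := by
        rw [← Real.rpow_mul (hc i), mul_one_div, div_self hpr0, Real.rpow_one]
      rw [h1, Real.mul_rpow (Real.rpow_nonneg (hc i) pr)
        (Finset.sum_nonneg fun j _ => Real.rpow_nonneg (Complex.abs.nonneg _) pr), h2]
    have step4 : ∀ i, (∑ j ∈ J, w i j ^ pr) ^ (1/pr) ≤ (∑ k, singVal (A i) k ^ pr) ^ (1/pr) := by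
      intro i
      apply Real.rpow_le_rpow
        (Finset.sum_nonneg fun j _ => Real.rpow_nonneg (Complex.abs.nonneg _) pr)
      · exact diag_rpow_le (A i) J (lvec Y) (rvec Y)
          (fun j hj l hl => lvec_dot Y (Finset.mem_filter.mp hj).2 (Finset.mem_filter.mp hl).2)
          (fun j _ l _ => rvec_dot Y j l) hpr
      · positivity
    calc (∑ j, singVal Y j ^ pr) ^ (1/pr)
        = (∑ j ∈ J, singVal Y j ^ pr) ^ (1/pr) := by rw [h0]
      _ ≤ (∑ j ∈ J, (∑ i, c i * w i j) ^ pr) ^ (1/pr) := by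
          apply Real.rpow_le_rpow
            (Finset.sum_nonneg fun j _ => Real.rpow_nonneg (singVal_nonneg Y j) pr) step1
          positivity
      _ ≤ ∑ i, (∑ j ∈ J, (c i * w i j) ^ pr) ^ (1/pr) := step2
      _ = ∑ i, c i * (∑ j ∈ J, w i j ^ pr) ^ (1/pr) := Finset.sum_congr rfl fun i _ => step3 i
      _ ≤ ∑ i, c i * (∑ k, singVal (A i) k ^ pr) ^ (1/pr) :=
          Finset.sum_le_sum fun i _ => mul_le_mul_of_nonneg_left (step4 i) (hc i)
      _ = ∑ i, c i * schatten p (A i) := Finset.sum_congr rfl fun i _ => by rw [hsch i]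

/-! ### Frobenius bound and continuity -/

def fro (X : Matrix n n ℂ) : ℝ := Real.sqrt (∑ i, ∑ j, Complex.abs (X i j) ^ 2)

lemma fro_nonneg (X : Matrix n n ℂ) : 0 ≤ fro X := Real.sqrt_nonneg _

lemma unit_sum_sq {x : n → ℂ} (hx : star x ⬝ᵥ x = 1) :
    ∑ i, Complex.abs (x i) ^ 2 = 1 := by
  have h1 : star x ⬝ᵥ x = ∑ i, ((Complex.abs (x i) ^ 2 : ℝ) : ℂ) := by
    apply Finset.sum_congr rfl
    intro i _
    rw [Pi.star_apply, RCLike.star_def, mul_comm, Complex.mul_conj, Complex.sq_abs]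
  rw [h1] at hx
  rw [← Complex.ofReal_sum] at hx
  exact_mod_cast hx

lemma singVal_le_fro (X : Matrix n n ℂ) (k : n) : singVal X k ≤ fro X := by
  set wv := X *ᵥ rvec X k with hwv
  have hdot := mulVec_rvec_dot X k k
  rw [if_pos rfl, mul_one] at hdot
  have h1 : singVal X k ^ 2 = ∑ i, Complex.abs (wv i) ^ 2 := by
    have h2 : star wv ⬝ᵥ wv = ∑ i, ((Complex.abs (wv i) ^ 2 : ℝ) : ℂ) := by
      apply Finset.sum_congr rfl
      intro i _
      rw [Pi.star_apply, RCLike.star_def, mul_comm, Complex.mul_conj, Complex.sq_abs]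
    rw [h2, ← Complex.ofReal_sum] at hdot
    exact_mod_cast hdot.symm
  have h3 : ∀ i, Complex.abs (wv i) ^ 2 ≤ ∑ j, Complex.abs (X i j) ^ 2 := by
    intro i
    have habs : Complex.abs (wv i) ≤ ∑ j, Complex.abs (X i j) * Complex.abs (rvec X k j) := by
      rw [hwv]
      refine le_trans (le_of_eq rfl) ?_
      calc Complex.abs ((X *ᵥ rvec X k) i)
          = Complex.abs (∑ j, X i j * rvec X k j) := rfl
        _ ≤ ∑ j, Complex.abs (X i j * rvec X k j) := Complex.abs.sum_le _ _
        _ = ∑ j, Complex.abs (X i j) * Complex.abs (rvec X k j) := by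
            exact Finset.sum_congr rfl fun j _ => _root_.map_mul _ _ _
    have hcs := Finset.sum_mul_sq_le_sq_mul_sq Finset.univ
      (fun j => Complex.abs (X i j)) (fun j => Complex.abs (rvec X k j))
    have hrv : ∑ j, Complex.abs (rvec X k j) ^ 2 = 1 := unit_sum_sq (rvec_unit X k)
    rw [hrv, mul_one] at hcs
    calc Complex.abs (wv i) ^ 2
        ≤ (∑ j, Complex.abs (X i j) * Complex.abs (rvec X k j)) ^ 2 := by
          apply pow_le_pow_left₀ (Complex.abs.nonneg _) habs
      _ ≤ ∑ j, Complex.abs (X i j) ^ 2 := hcs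
  have h4 : singVal X k ^ 2 ≤ ∑ i, ∑ j, Complex.abs (X i j) ^ 2 := by
    rw [h1]
    exact Finset.sum_le_sum fun i _ => h3 i
  calc singVal X k = Real.sqrt (singVal X k ^ 2) := (Real.sqrt_sq (singVal_nonneg X k)).symm
    _ ≤ fro X := Real.sqrt_le_sqrt h4

lemma schatten_le_fro {p : ℝ≥0∞} (hp : 1 ≤ p) (X : Matrix n n ℂ) :
    schatten p X ≤ (Fintype.card n : ℝ) * fro X := by
  have hrhs : (0:ℝ) ≤ (Fintype.card n : ℝ) * fro X :=
    mul_nonneg (Nat.cast_nonneg _) (fro_nonneg X)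
  rcases isEmpty_or_nonempty n with hn | hn
  · rw [schatten]
    split_ifs with h
    · rw [Real.iSup_of_isEmpty]; exact hrhs
    · have hpr : 1 ≤ p.toReal := by
        rw [← ENNReal.toReal_one]; exact ENNReal.toReal_mono h hp
      rw [Finset.univ_eq_empty, Finset.sum_empty, Real.zero_rpow (by positivity)]
      exact hrhs
  · have hcard1 : (1:ℝ) ≤ (Fintype.card n : ℝ) := by
      exact_mod_cast Nat.one_le_iff_ne_zero.mpr (Fintype.card_ne_zero)
    rw [schatten]
    split_ifs with h
    · refine ciSup_le fun k => le_trans (singVal_le_fro X k) ?_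
      exact le_mul_of_one_le_left (fro_nonneg X) hcard1
    · have hpr : 1 ≤ p.toReal := by
        rw [← ENNReal.toReal_one]; exact ENNReal.toReal_mono h hp
      have hpr0 : p.toReal ≠ 0 := by linarith
      calc (∑ k, singVal X k ^ p.toReal) ^ (1/p.toReal)
          ≤ (∑ _k : n, fro X ^ p.toReal) ^ (1/p.toReal) := by
            apply Real.rpow_le_rpow
              (Finset.sum_nonneg fun k _ => Real.rpow_nonneg (singVal_nonneg X k) _)
              (Finset.sum_le_sum fun k _ =>
                Real.rpow_le_rpow (singVal_nonneg X k) (singVal_le_fro X k) (by linarith))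
            positivity
        _ = ((Fintype.card n : ℝ) * fro X ^ p.toReal) ^ (1/p.toReal) := by
            rw [Finset.sum_const, nsmul_eq_mul, Finset.card_univ]
        _ = (Fintype.card n : ℝ) ^ (1/p.toReal) * fro X := by
            rw [Real.mul_rpow (Nat.cast_nonneg _) (Real.rpow_nonneg (fro_nonneg X) _),
              ← Real.rpow_mul (fro_nonneg X), mul_one_div, div_self hpr0, Real.rpow_one]
        _ ≤ (Fintype.card n : ℝ) * fro X := by
            apply mul_le_mul_of_nonneg_right _ (fro_nonneg X)
            calc (Fintype.card n : ℝ) ^ (1/p.toReal)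
                ≤ (Fintype.card n : ℝ) ^ (1:ℝ) :=
                  Real.rpow_le_rpow_of_exponent_le hcard1
                    (by rw [div_le_one (by linarith)]; linarith)
              _ = (Fintype.card n : ℝ) := Real.rpow_one _

lemma schatten_sub_bound {p : ℝ≥0∞} (hp : 1 ≤ p) (X Y : Matrix n n ℂ) :
    schatten p X ≤ schatten p Y + (Fintype.card n : ℝ) * fro (X - Y) := by
  classical
  have hdecomp : X = ∑ b : Bool, ((1:ℝ) : ℂ) • (cond b Y (X - Y)) := by
    rw [Fintype.sum_bool]
    simp only [cond_true, cond_false, Complex.ofReal_one, one_smul]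
    abel
  calc schatten p X = schatten p (∑ b : Bool, ((1:ℝ) : ℂ) • (cond b Y (X - Y))) := by
        rw [← hdecomp]
    _ ≤ ∑ b : Bool, (1:ℝ) * schatten p (cond b Y (X - Y)) :=
        schatten_convex hp (fun _ => (1:ℝ)) (fun _ => zero_le_one) _
    _ = schatten p Y + schatten p (X - Y) := by
        rw [Fintype.sum_bool]
        simp
    _ ≤ schatten p Y + (Fintype.card n : ℝ) * fro (X - Y) :=
        add_le_add_right (schatten_le_fro hp (X - Y)) _

lemma fro_continuous : Continuous (fun X : Matrix n n ℂ => fro X) := by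
  apply Real.continuous_sqrt.comp
  apply continuous_finset_sum
  intro i _
  apply continuous_finset_sum
  intro j _
  have hc : Continuous fun X : Matrix n n ℂ => X i j :=
    (continuous_apply j).comp (continuous_apply i)
  exact (Complex.continuous_abs.comp hc).pow 2

lemma fro_zero : fro (0 : Matrix n n ℂ) = 0 := by
  simp [fro]

lemma fro_sub_comm (X Y : Matrix n n ℂ) : fro (X - Y) = fro (Y - X) := by
  rw [fro, fro]
  congr 1
  apply Finset.sum_congr rfl
  intro i _
  apply Finset.sum_congr rfl
  intro j _
  rw [Matrix.sub_apply, Matrix.sub_apply, Complex.abs.map_sub]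

lemma schatten_continuous {p : ℝ≥0∞} (hp : 1 ≤ p) :
    Continuous (fun X : Matrix n n ℂ => schatten p X) := by
  rw [continuous_iff_continuousAt]
  intro X₀
  rw [ContinuousAt, tendsto_iff_dist_tendsto_zero]
  have hb : ∀ X : Matrix n n ℂ,
      dist (schatten p X) (schatten p X₀) ≤ (Fintype.card n : ℝ) * fro (X - X₀) := by
    intro X
    rw [Real.dist_eq, abs_sub_le_iff]
    constructor
    · have := schatten_sub_bound hp X X₀; linarith
    · have h1 := schatten_sub_bound hp X₀ X
      rw [fro_sub_comm X₀ X] at h1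
      linarith
  apply squeeze_zero (fun X => dist_nonneg) hb
  have ht : Filter.Tendsto (fun X : Matrix n n ℂ => (Fintype.card n : ℝ) * fro (X - X₀))
      (nhds X₀) (nhds ((Fintype.card n : ℝ) * fro (X₀ - X₀))) :=
    (continuous_const.mul (fro_continuous.comp (continuous_id.sub continuous_const))).tendsto X₀
  simpa [sub_self, fro_zero] using ht

/-! ### rank one facts -/

lemma outer_ne_zero {u v : n → ℂ} (hu : star u ⬝ᵥ u = 1) (hv : star v ⬝ᵥ v = 1) :
    outer u v ≠ 0 := by
  have hun : u ≠ 0 := by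
    rintro rfl
    simp at hu
  have hvn : v ≠ 0 := by
    rintro rfl
    simp at hv
  obtain ⟨r, hr⟩ := Function.ne_iff.mp hun
  obtain ⟨c, hc⟩ := Function.ne_iff.mp hvn
  intro h0
  have := congrFun (congrFun h0 r) c
  simp only [outer, Matrix.vecMulVec_apply, Pi.star_apply, Matrix.zero_apply] at this
  rcases mul_eq_zero.mp this with h | h
  · exact hr (by simpa using h)
  · exact hc (by simpa [star_eq_zero] using h)

lemma schatten_one_outer_le {u v : n → ℂ} (hu : star u ⬝ᵥ u = 1) (hv : star v ⬝ᵥ v = 1) :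
    schatten 1 (outer u v) ≤ 1 := by
  classical
  rw [schatten_one]
  set E := outer u v with hE
  set K : Finset n := Finset.univ.filter (fun j => singVal E j ≠ 0) with hK
  have hKs : ∀ j ∈ K, singVal E j ≠ 0 := fun j hj => (Finset.mem_filter.mp hj).2
  set P : n → ℝ := fun j => Complex.abs (star (lvec E j) ⬝ᵥ u) with hP
  set Q : n → ℝ := fun j => Complex.abs (star (rvec E j) ⬝ᵥ v) with hQ
  have hs : ∀ j, singVal E j = P j * Q j := by
    intro j
    rw [singVal_abs_dot E j]
    have h1 : E *ᵥ rvec E j = (star v ⬝ᵥ rvec E j) • u := outer_mulVec u v (rvec E j)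
    rw [h1, dotProduct_smul, smul_eq_mul, _root_.map_mul, mul_comm, hP, hQ]
    congr 1
    exact abs_dot_comm _ _
  have h0 : ∑ j, singVal E j = ∑ j ∈ K, singVal E j := by
    symm
    apply Finset.sum_subset (Finset.filter_subset _ _)
    intro j _ hj
    by_contra hcon
    exact hj (Finset.mem_filter.mpr ⟨Finset.mem_univ j, hcon⟩)
  have hP2 : ∑ j ∈ K, P j ^ 2 ≤ 1 := by
    have hbes := bessel_dot K (lvec E)
      (fun k hk l hl => lvec_dot E (hKs k hk) (hKs l hl)) u hu
    exact hbes
  have hQ2 : ∑ j ∈ K, Q j ^ 2 ≤ 1 :=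
    bessel_dot K (rvec E) (fun k _ l _ => rvec_dot E k l) v hv
  have hcs := Finset.sum_mul_sq_le_sq_mul_sq K P Q
  have hnn : 0 ≤ ∑ j ∈ K, P j * Q j :=
    Finset.sum_nonneg fun j _ => mul_nonneg (Complex.abs.nonneg _) (Complex.abs.nonneg _)
  have hp0 : 0 ≤ ∑ j ∈ K, P j ^ 2 := Finset.sum_nonneg fun j _ => sq_nonneg _
  have hq0 : 0 ≤ ∑ j ∈ K, Q j ^ 2 := Finset.sum_nonneg fun j _ => sq_nonneg _
  have hPQ : ∑ j ∈ K, P j * Q j ≤ 1 := by nlinarith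
  calc ∑ j, singVal E j = ∑ j ∈ K, singVal E j := h0
    _ = ∑ j ∈ K, P j * Q j := Finset.sum_congr rfl fun j _ => hs j
    _ ≤ 1 := hPQ

end Aux


/-- The `1 → p` norm is attained on a rank-one operator `|u⟩⟨v|` with `u, v` unit vectors. -/
theorem stmt8 {dF dG : ℕ} (hF : 0 < dF) (Φ : Matrix (Fin dF) (Fin dF) ℂ →ₗ[ℂ] Matrix (Fin dG) (Fin dG) ℂ) (p : ℝ≥0∞) (hp : 1 ≤ p) :
    ∃ u v : Fin dF → ℂ, IsUnit' u ∧ IsUnit' v ∧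
      opNorm 1 p Φ = schatten p (Φ (outer u v)) ∧
      ∀ u' v' : Fin dF → ℂ, IsUnit' u' → IsUnit' v' →
        schatten p (Φ (outer u' v')) ≤ opNorm 1 p Φ := by
  classical
  set S : Set ((Fin dF → ℂ) × (Fin dF → ℂ)) := {x | IsUnit' x.1 ∧ IsUnit' x.2} with hS
  have hdotcont : Continuous fun x : Fin dF → ℂ => star x ⬝ᵥ x := by
    have heq : (fun x : Fin dF → ℂ => star x ⬝ᵥ x)
        = fun x => ∑ i, (starRingEnd ℂ) (x i) * x i := by
      funext x
      simp [dotProduct, RCLike.star_def]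
    rw [heq]
    apply continuous_finset_sum
    intro i _
    exact (Complex.continuous_conj.comp (continuous_apply i)).mul (continuous_apply i)
  have hSc : IsCompact S := by
    apply Metric.isCompact_of_isClosed_isBounded
    · have h1 : IsClosed {x : (Fin dF → ℂ) × (Fin dF → ℂ) | star x.1 ⬝ᵥ x.1 = 1} :=
        isClosed_eq (hdotcont.comp continuous_fst) continuous_const
      have h2 : IsClosed {x : (Fin dF → ℂ) × (Fin dF → ℂ) | star x.2 ⬝ᵥ x.2 = 1} :=
        isClosed_eq (hdotcont.comp continuous_snd) continuous_const
      exact h1.inter h2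
    · apply (Metric.isBounded_closedBall (x := (0 : (Fin dF → ℂ) × (Fin dF → ℂ))) (r := 1)).subset
      intro x hx
      rw [Metric.mem_closedBall, dist_zero_right]
      have hcoord : ∀ (u : Fin dF → ℂ), IsUnit' u → ‖u‖ ≤ 1 := by
        intro u hu
        rw [pi_norm_le_iff_of_nonneg zero_le_one]
        intro i
        have hsum := unit_sum_sq hu
        have hterm : Complex.abs (u i) ^ 2 ≤ 1 := by
          rw [← hsum]
          exact Finset.single_le_sum (f := fun j => Complex.abs (u j) ^ 2)
            (fun j _ => sq_nonneg _) (Finset.mem_univ i)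
        have h0 : (0:ℝ) ≤ Complex.abs (u i) := Complex.abs.nonneg _
        have : ‖u i‖ = Complex.abs (u i) := rfl
        rw [this]
        nlinarith
      calc ‖x‖ = max ‖x.1‖ ‖x.2‖ := rfl
        _ ≤ 1 := max_le (hcoord x.1 hx.1) (hcoord x.2 hx.2)
  have houter : Continuous fun x : (Fin dF → ℂ) × (Fin dF → ℂ) => outer x.1 x.2 := by
    apply continuous_pi
    intro r
    apply continuous_pi
    intro c
    show Continuous fun x : (Fin dF → ℂ) × (Fin dF → ℂ) => x.1 r * star (x.2 c)
    exact ((continuous_apply r).comp continuous_fst).mul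
      (continuous_star.comp ((continuous_apply c).comp continuous_snd))
  have hPhicont : Continuous Φ := Φ.continuous_of_finiteDimensional
  have hgcont : Continuous fun x : (Fin dF → ℂ) × (Fin dF → ℂ) =>
      schatten p (Φ (outer x.1 x.2)) :=
    (schatten_continuous hp).comp (hPhicont.comp houter)
  set e : Fin dF → ℂ := Pi.single ⟨0, hF⟩ 1 with he
  have heu : IsUnit' e := by
    show star e ⬝ᵥ e = 1
    simp [he, dotProduct, Pi.single_apply, apply_ite]
  have heS : (e, e) ∈ S := ⟨heu, heu⟩
  obtain ⟨z, hzS, hzmax⟩ := hSc.exists_isMaxOn ⟨(e, e), heS⟩ hgcont.continuousOn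
  rw [isMaxOn_iff] at hzmax
  set M := schatten p (Φ (outer z.1 z.2)) with hM
  have hM0 : 0 ≤ M := schatten_nonneg p _
  have hub : ∀ X : Matrix (Fin dF) (Fin dF) ℂ, schatten p (Φ X) ≤ schatten 1 X * M := by
    intro X
    have hdec : Φ X = ∑ j, ((singVal X j : ℝ) : ℂ) • Φ (outer (lvec X j) (rvec X j)) := by
      conv_lhs => rw [svd_decomp X]
      rw [map_sum]
      exact Finset.sum_congr rfl fun j _ => by rw [_root_.map_smul]
    rw [hdec]
    calc schatten p (∑ j, ((singVal X j : ℝ) : ℂ) • Φ (outer (lvec X j) (rvec X j)))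
        ≤ ∑ j, singVal X j * schatten p (Φ (outer (lvec X j) (rvec X j))) :=
          schatten_convex hp (singVal X) (singVal_nonneg X) _
      _ ≤ ∑ j, singVal X j * M := Finset.sum_le_sum fun j _ =>
          mul_le_mul_of_nonneg_left
            (hzmax (lvec X j, rvec X j) ⟨lvec_unit X j, rvec_unit X j⟩)
            (singVal_nonneg X j)
      _ = (∑ j, singVal X j) * M := by rw [Finset.sum_mul]
      _ = schatten 1 X * M := by rw [schatten_one]
  have hratio : ∀ X : {X : Matrix (Fin dF) (Fin dF) ℂ // X ≠ 0},
      schatten p (Φ X.1) / schatten 1 X.1 ≤ M := by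
    intro X
    rw [div_le_iff₀ (schatten_one_pos X.2)]
    calc schatten p (Φ X.1) ≤ schatten 1 X.1 * M := hub X.1
      _ = M * schatten 1 X.1 := mul_comm _ _
  haveI hne : Nonempty {X : Matrix (Fin dF) (Fin dF) ℂ // X ≠ 0} :=
    ⟨⟨outer e e, outer_ne_zero heu heu⟩⟩
  have hbdd : BddAbove (Set.range fun X : {X : Matrix (Fin dF) (Fin dF) ℂ // X ≠ 0} =>
      schatten p (Φ X.1) / schatten 1 X.1) := by
    refine ⟨M, ?_⟩
    rintro _ ⟨X, rfl⟩
    exact hratio X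
  have hle : opNorm 1 p Φ ≤ M := by
    rw [opNorm]
    exact ciSup_le hratio
  have hXz : outer z.1 z.2 ≠ 0 := outer_ne_zero hzS.1 hzS.2
  have hge : M ≤ opNorm 1 p Φ := by
    have h1 : M ≤ schatten p (Φ (outer z.1 z.2)) / schatten 1 (outer z.1 z.2) := by
      rw [le_div_iff₀ (schatten_one_pos hXz)]
      calc M * schatten 1 (outer z.1 z.2) ≤ M * 1 :=
          mul_le_mul_of_nonneg_left (schatten_one_outer_le hzS.1 hzS.2) hM0
        _ = M := mul_one M
        _ = schatten p (Φ (outer z.1 z.2)) := hM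
    refine le_trans h1 ?_
    rw [opNorm]
    exact le_ciSup hbdd (⟨outer z.1 z.2, hXz⟩ : {X : Matrix (Fin dF) (Fin dF) ℂ // X ≠ 0})
  have hEq : opNorm 1 p Φ = M := le_antisymm hle hge
  refine ⟨z.1, z.2, hzS.1, hzS.2, by rw [hEq, hM], ?_⟩
  intro u' v' hu' hv'
  have hle' := hzmax (u', v') ⟨hu', hv'⟩
  rw [hEq]
  exact hle'


end SchattenNotes
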